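/- (Algebraic Littlewood–Richardson formula, dual version.) Let k be a field, H a Hopf algebra over k with antipode S, and B = (L_λ)_{λ ∈ P} a k-basis of H with multiplication structure constants b^ν_{λ,μ} and coproduct structure constants c^ν_{λ,μ}. Assume: (1) there are functions e : P → ℕ and T : P → P with T an involution and e∘T = e, such that S(L_ρ) = (−1)^{e(ρ)}·L_{T(ρ)} for all ρ ∈ P; (2) for each ν, μ ∈ P the set {λ ∈ P : b^ν_{λ,μ} ≠ 0} is finite; and (3) for each μ, π ∈ P the set {μ⁺ ∈ P : c^{μ⁺}_{μ,π} ≠ 0} is finite. Then for all λ, μ, σ, τ ∈ P, the convolution product of skew functionals satisfies R_{μ/λ}·R_{τ/σ} = Σ_{π,ρ,λ⁻,μ⁺} (−1)^{e(ρ)}·b^τ_{π,ρ,σ}·c^λ_{λ⁻,T(ρ)}·c^{μ⁺}_{μ,π}·R_{μ⁺/λ⁻} as linear functionals on H, where the sum is over π, ρ, λ⁻, μ⁺ ∈ P and is finite: (π,ρ) ranges over the finite support of (π,ρ) ↦ b^τ_{π,ρ,σ} (finite by hypothesis (2)), λ⁻ over the finite support of λ⁻ ↦ c^λ_{λ⁻,T(ρ)},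 and μ⁺ over the finite set given by hypothesis (3). -/

import Mathlib

open TensorProduct

variable {k : Type*} [Field k] {H : Type*} [Ring H] [HopfAlgebra k H]
variable {P : Type*}

/-- The convolution product of two functionals on `H`:
`(a · b)(h) := Σ a(h₁) · b(h₂)`. -/
noncomputable def conv (a b : H →ₗ[k] k) : H →ₗ[k] k :=
  LinearMap.mul' k k ∘ₗ TensorProduct.map a b ∘ₗ Coalgebra.comul

/-- The multiplication structure constant `b^ν_{λ,μ}`: the `L_ν`-coordinate of
`L_λ · L_μ`. -/
noncomputable def bC (B : Module.Basis P k H) (ν lam μ : P) : k :=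
  B.repr (B lam * B μ) ν

/-- The coproduct structure constant `c^ν_{λ,μ}`: the `(L_λ ⊗ L_μ)`-coordinate
of `Δ(L_ν)` with respect to the basis of `H ⊗ H` induced by `B`. -/
noncomputable def cC (B : Module.Basis P k H) (ν lam μ : P) : k :=
  (B.tensorProduct B).repr (Coalgebra.comul (B ν)) (lam, μ)

/-- The skew functional `R_{ν/μ}`, given by `R_{ν/μ}(g) := R_ν(g · L_μ)`. -/
noncomputable def skewR (B : Module.Basis P k H) (ν μ : P) : H →ₗ[k] k :=
  B.coord ν ∘ₗ LinearMap.mulRight k (B μ)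

/-- The triple product constant `b^τ_{π,ρ,σ} := Σ_κ b^κ_{π,ρ} · b^τ_{κ,σ}`
(a finite sum). -/
noncomputable def bC3 (B : Module.Basis P k H) (τ π ρ σ : P) : k :=
  ∑ᶠ κ, bC B κ π ρ * bC B τ κ σ

lemma basis_expand {ι M : Type*} [AddCommGroup M] [Module k M] (b : Module.Basis ι k M) (x : M) :
    x = ∑ i ∈ (b.repr x).support, b.repr x i • b i := by
  conv_lhs => rw [← b.linearCombination_repr x]
  rw [Finsupp.linearCombination_apply, Finsupp.sum]

lemma theta {a : H} {ι : Type*} (r : Coalgebra.Repr k a ι) :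
    ∑ i ∈ r.index, Coalgebra.comul (R := k) (r.left i) *
      (1 ⊗ₜ[k] HopfAlgebra.antipode (R := k) (r.right i)) = a ⊗ₜ[k] 1 := by
  classical
  set S : H →ₗ[k] H := HopfAlgebra.antipode (R := k) with hS
  let a₁ : ∀ i : ι, Coalgebra.Repr k (r.left i) (H × H) := fun i => Coalgebra.Repr.arbitrary k (r.left i)
  let a₂ : ∀ i : ι, Coalgebra.Repr k (r.right i) (H × H) := fun i => Coalgebra.Repr.arbitrary k (r.right i)
  have hco := Coalgebra.sum_tmul_tmul_eq r a₁ a₂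
  have key := congrArg (LinearMap.lTensor H ((LinearMap.mul' k H) ∘ₗ (LinearMap.lTensor H S))) hco
  simp only [map_sum, LinearMap.lTensor_tmul, LinearMap.coe_comp, Function.comp_apply,
    LinearMap.mul'_apply] at key
  -- key : ∑ i ∑ j, (a₁ i).left j ⊗ₜ ((a₁ i).right j * S (r.right i))
  --      = ∑ i ∑ j, r.left i ⊗ₜ ((a₂ i).left j * S ((a₂ i).right j))
  calc ∑ i ∈ r.index, Coalgebra.comul (R := k) (r.left i) * (1 ⊗ₜ[k] S (r.right i))
      = ∑ i ∈ r.index, ∑ j ∈ (a₁ i).index,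
          (a₁ i).left j ⊗ₜ[k] ((a₁ i).right j * S (r.right i)) := by
        refine Finset.sum_congr rfl fun i _ => ?_
        rw [← (a₁ i).eq, Finset.sum_mul]
        exact Finset.sum_congr rfl fun j _ => by
          rw [Algebra.TensorProduct.tmul_mul_tmul, mul_one]
    _ = ∑ i ∈ r.index, ∑ j ∈ (a₂ i).index,
          r.left i ⊗ₜ[k] ((a₂ i).left j * S ((a₂ i).right j)) := key
    _ = ∑ i ∈ r.index, r.left i ⊗ₜ[k]
          (algebraMap k H (Coalgebra.counit (R := k) (r.right i))) := by
        refine Finset.sum_congr rfl fun i _ => ?_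
        rw [← TensorProduct.tmul_sum, HopfAlgebra.sum_mul_antipode_eq_algebraMap_counit (a₂ i)]
    _ = a ⊗ₜ[k] 1 := by
        have h2 := congrArg (LinearMap.lTensor H (Algebra.linearMap k H))
          (Coalgebra.sum_tmul_counit_eq r)
        rw [map_sum] at h2
        simp only [LinearMap.lTensor_tmul, Algebra.linearMap_apply, map_one] at h2
        exact h2

lemma map_mulRight (a b : H) (z : H ⊗[k] H) :
    TensorProduct.map (LinearMap.mulRight k a) (LinearMap.mulRight k b) z = z * (a ⊗ₜ[k] b) := by
  induction z using TensorProduct.induction_on with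
  | zero => simp
  | tmul u v => simp [Algebra.TensorProduct.tmul_mul_tmul]
  | add x y hx hy => simp [add_mul, hx, hy]

lemma mul_one_tmul (c : H) (z : H ⊗[k] H) :
    z * (1 ⊗ₜ[k] c) = LinearMap.lTensor H (LinearMap.mulRight k c) z := by
  induction z using TensorProduct.induction_on with
  | zero => simp
  | tmul u v => simp [Algebra.TensorProduct.tmul_mul_tmul]
  | add x y hx hy => simp [add_mul, hx, hy]

lemma key {a : H} {ι : Type*} (r : Coalgebra.Repr k a ι) (g b : H) :
    TensorProduct.map (LinearMap.mulRight k a) (LinearMap.mulRight k b)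
        (Coalgebra.comul (R := k) g)
      = ∑ i ∈ r.index, Coalgebra.comul (R := k) (g * r.left i) *
          (1 ⊗ₜ[k] (HopfAlgebra.antipode (R := k) (r.right i) * b)) := by
  rw [map_mulRight]
  calc Coalgebra.comul (R := k) g * (a ⊗ₜ[k] b)
      = Coalgebra.comul (R := k) g * ((a ⊗ₜ[k] (1:H)) * ((1:H) ⊗ₜ[k] b)) := by
        rw [Algebra.TensorProduct.tmul_mul_tmul, mul_one, one_mul]
    _ = Coalgebra.comul (R := k) g *
          ((∑ i ∈ r.index, Coalgebra.comul (R := k) (r.left i) *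
            (1 ⊗ₜ[k] HopfAlgebra.antipode (R := k) (r.right i))) * ((1:H) ⊗ₜ[k] b)) := by
        rw [theta r]
    _ = ∑ i ∈ r.index, Coalgebra.comul (R := k) (g * r.left i) *
          (1 ⊗ₜ[k] (HopfAlgebra.antipode (R := k) (r.right i) * b)) := by
        rw [Finset.sum_mul, Finset.mul_sum]
        refine Finset.sum_congr rfl fun i _ => ?_
        rw [Bialgebra.comul_mul]
        rw [mul_assoc, mul_assoc, Algebra.TensorProduct.tmul_mul_tmul, one_mul]

/-- A Sweedler representation of `comul (B lam)` over the basis. -/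
noncomputable def basisRepr (B : Module.Basis P k H) (lam : P) : Coalgebra.Repr k (B lam) (P × P) where
  index := ((B.tensorProduct B).repr (Coalgebra.comul (R := k) (B lam))).support
  left := fun p => B p.1
  right := fun p => cC B lam p.1 p.2 • B p.2
  eq := by
    conv_rhs => rw [basis_expand (B.tensorProduct B) (Coalgebra.comul (R := k) (B lam))]
    refine Finset.sum_congr rfl fun p _ => ?_
    obtain ⟨p1, p2⟩ := p
    simp [cC, Module.Basis.tensorProduct_apply, TensorProduct.tmul_smul]

lemma conv_add_right (f b₁ b₂ : H →ₗ[k] k) :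
    conv f (b₁ + b₂) = conv f b₁ + conv f b₂ := by
  ext h
  simp [conv, TensorProduct.map_add_right]

lemma conv_smul_right (f : H →ₗ[k] k) (c : k) (b : H →ₗ[k] k) :
    conv f (c • b) = c • conv f b := by
  ext h
  simp [conv, TensorProduct.map_smul_right]

lemma conv_zero_right (f : H →ₗ[k] k) : conv f 0 = 0 := by
  have := conv_smul_right f 0 0
  simpa using this

lemma conv_sum_smul (f : H →ₗ[k] k) {ι : Type*} (s : Finset ι) (c : ι → k)
    (g : ι → H →ₗ[k] k) :
    conv f (∑ i ∈ s, c i • g i) = ∑ i ∈ s, c i • conv f (g i) := by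
  classical
  induction s using Finset.induction_on with
  | empty => simpa using conv_zero_right f
  | insert _ _ hx ih =>
    rw [Finset.sum_insert hx, conv_add_right, conv_smul_right, ih, Finset.sum_insert hx]

lemma mulmap_coord (B : Module.Basis P k H) (μ π : P) :
    (LinearMap.mul' k k) ∘ₗ TensorProduct.map (B.coord μ) (B.coord π)
      = (B.tensorProduct B).coord (μ, π) := by
  classical
  apply (B.tensorProduct B).ext
  intro p
  obtain ⟨p1, p2⟩ := p
  conv_rhs => rw [Module.Basis.coord_apply, Module.Basis.repr_self]
  conv_lhs => rw [Module.Basis.tensorProduct_apply]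
  simp only [LinearMap.coe_comp, Function.comp_apply, TensorProduct.map_tmul,
    LinearMap.mul'_apply, Module.Basis.coord_apply, Module.Basis.repr_self]
  rw [Finsupp.single_apply, Finsupp.single_apply, Finsupp.single_apply]
  by_cases h1 : p1 = μ <;> by_cases h2 : p2 = π <;> simp [h1, h2, Prod.ext_iff]

lemma conv_coord_eval (B : Module.Basis P k H) (μ π : P) (x : H) :
    conv (B.coord μ) (B.coord π) x
      = (B.tensorProduct B).repr (Coalgebra.comul (R := k) x) (μ, π) := by
  have h := congrFun (congrArg (fun (f : H ⊗[k] H →ₗ[k] k) => fun z => f z)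
    (mulmap_coord B μ π)) (Coalgebra.comul (R := k) x)
  simpa [conv, Module.Basis.coord_apply] using h

lemma conv_coord_coord (B : Module.Basis P k H)
    (hc : ∀ μ π : P, {μp : P | cC B μp μ π ≠ 0}.Finite) (μ π : P) :
    conv (B.coord μ) (B.coord π)
      = ∑ ν ∈ (hc μ π).toFinset, cC B ν μ π • B.coord ν := by
  classical
  apply B.ext
  intro α
  rw [conv_coord_eval]
  have hr : (B.tensorProduct B).repr (Coalgebra.comul (R := k) (B α)) (μ, π) = cC B α μ π := rfl
  rw [hr]
  rw [LinearMap.sum_apply]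
  simp only [LinearMap.smul_apply, Module.Basis.coord_apply, Module.Basis.repr_self, smul_eq_mul,
    Finsupp.single_apply]
  rw [Finset.sum_eq_single α]
  · simp
  · intro b _ hb
    simp [Ne.symm hb]
  · intro hα
    have : cC B α μ π = 0 := by
      by_contra h
      exact hα ((hc μ π).mem_toFinset.2 h)
    simp [this]

lemma bC3_mem [DecidableEq P] (B : Module.Basis P k H) (hb : ∀ ν μ : P, {lam : P | bC B ν lam μ ≠ 0}.Finite)
    (τ σ ρ π : P) (h : bC3 B τ π ρ σ ≠ 0) :
    π ∈ (hb τ σ).toFinset.biUnion (fun κ => (hb κ ρ).toFinset) := by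
  rw [bC3] at h
  have hex : ∃ κ, bC B κ π ρ * bC B τ κ σ ≠ 0 := by
    by_contra hA
    push_neg at hA
    exact h (finsum_eq_zero_of_forall_eq_zero hA)
  obtain ⟨κ, hκ⟩ := hex
  exact Finset.mem_biUnion.2 ⟨κ, (hb τ σ).mem_toFinset.2 (right_ne_zero_of_mul hκ),
    (hb κ ρ).mem_toFinset.2 (left_ne_zero_of_mul hκ)⟩

lemma coord_mul_mul (B : Module.Basis P k H) (τ α ρ σ : P) :
    B.coord τ (B α * (B ρ * B σ)) = bC3 B τ α ρ σ := by
  classical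
  rw [← mul_assoc]
  conv_lhs => rw [show B α * B ρ * B σ = (B α * B ρ) * B σ from rfl,
    basis_expand B (B α * B ρ)]
  rw [Finset.sum_mul, map_sum]
  have : ∀ κ, B.coord τ ((B.repr (B α * B ρ)) κ • B κ * B σ)
      = bC B κ α ρ * bC B τ κ σ := by
    intro κ
    rw [smul_mul_assoc, map_smul, smul_eq_mul, Module.Basis.coord_apply]
    rfl
  rw [Finset.sum_congr rfl fun κ _ => this κ]
  rw [bC3]
  exact (finsum_eq_sum_of_support_subset _ (fun κ hκ => by
    have : bC B κ α ρ ≠ 0 := left_ne_zero_of_mul hκ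
    exact Finsupp.mem_support_iff.2 this)).symm

lemma coord_mulRight_eq [DecidableEq P] (B : Module.Basis P k H)
    (hb : ∀ ν μ : P, {lam : P | bC B ν lam μ ≠ 0}.Finite) (τ σ ρ : P) :
    B.coord τ ∘ₗ LinearMap.mulRight k (B ρ * B σ)
      = ∑ π ∈ (hb τ σ).toFinset.biUnion (fun κ => (hb κ ρ).toFinset),
          bC3 B τ π ρ σ • B.coord π := by
  classical
  apply B.ext
  intro α
  rw [LinearMap.comp_apply, LinearMap.mulRight_apply, coord_mul_mul]
  rw [LinearMap.sum_apply]
  simp only [LinearMap.smul_apply, Module.Basis.coord_apply, Module.Basis.repr_self, smul_eq_mul,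
    Finsupp.single_apply]
  rw [Finset.sum_eq_single α]
  · simp
  · intro b _ hb'
    simp [Ne.symm hb']
  · intro hα
    have : bC3 B τ α ρ σ = 0 := by
      by_contra h
      exact hα (bC3_mem B hb τ σ ρ α h)
    simp [this]

lemma map_lTensor (f g : H →ₗ[k] k) (h : H →ₗ[k] H) (z : H ⊗[k] H) :
    TensorProduct.map f g (LinearMap.lTensor H h z) = TensorProduct.map f (g ∘ₗ h) z := by
  induction z using TensorProduct.induction_on with
  | zero => simp
  | tmul u v => simp
  | add x y hx hy => simp [hx, hy]

lemma conv_apply' (a b : H →ₗ[k] k) (x : H) :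
    conv a b x = LinearMap.mul' k k (TensorProduct.map a b (Coalgebra.comul (R := k) x)) := rfl

/-- The fully-expanded inner computation. -/
lemma inner_eval [DecidableEq P] (B : Module.Basis P k H)
    (hb : ∀ ν μ : P, {lam : P | bC B ν lam μ ≠ 0}.Finite)
    (hc : ∀ μ π : P, {μp : P | cC B μp μ π ≠ 0}.Finite)
    (μ τ σ ρ' : P) (x : H) :
    LinearMap.mul' k k (TensorProduct.map (B.coord μ) (B.coord τ)
        (Coalgebra.comul (R := k) x * (1 ⊗ₜ[k] (B ρ' * B σ))))
      = ∑ π ∈ (hb τ σ).toFinset.biUnion (fun κ => (hb κ ρ').toFinset),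
          bC3 B τ π ρ' σ *
            ∑ ν ∈ (hc μ π).toFinset, cC B ν μ π * B.coord ν x := by
  rw [mul_one_tmul, map_lTensor, ← conv_apply', coord_mulRight_eq B hb τ σ ρ',
    conv_sum_smul]
  rw [LinearMap.sum_apply]
  refine Finset.sum_congr rfl fun π _ => ?_
  rw [LinearMap.smul_apply, smul_eq_mul, conv_coord_coord B hc μ π, LinearMap.sum_apply]
  congr 1

/-- **Algebraic Littlewood–Richardson formula, dual version.**  If the
antipode acts on the basis by `S(L_ρ) = (−1)^{e(ρ)} • L_{T(ρ)}` with `T` an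
involution and `e ∘ T = e`, for each `ν, μ` the set `{λ : b^ν_{λ,μ} ≠ 0}` is
finite, and for each `μ, π` the set `{μ⁺ : c^{μ⁺}_{μ,π} ≠ 0}` is finite, then
`R_{μ/λ} · R_{τ/σ}
  = Σ_{π,ρ,λ⁻,μ⁺} (−1)^{e(ρ)} · b^τ_{π,ρ,σ} · c^λ_{λ⁻,T(ρ)} · c^{μ⁺}_{μ,π}
      • R_{μ⁺/λ⁻}`
as linear functionals on `H`, a finitely supported sum over quadruples
`(π, ρ, λ⁻, μ⁺)`. -/
theorem skewR_conv_skewR (B : Module.Basis P k H) (e : P → ℕ) (T : P → P)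
    (hT : Function.Involutive T) (heT : ∀ ρ : P, e (T ρ) = e ρ)
    (hS : ∀ ρ : P,
      HopfAlgebra.antipode (R := k) (B ρ) = ((-1 : k) ^ e ρ) • B (T ρ))
    (hb : ∀ ν μ : P, {lam : P | bC B ν lam μ ≠ 0}.Finite)
    (hc : ∀ μ π : P, {μp : P | cC B μp μ π ≠ 0}.Finite)
    (lam μ σ τ : P) :
    conv (skewR B μ lam) (skewR B τ σ) =
      ∑ᶠ q : P × P × P × P,
        (((-1 : k) ^ e q.2.1) * bC3 B τ q.1 q.2.1 σ
            * cC B lam q.2.2.1 (T q.2.1) * cC B q.2.2.2 μ q.1)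
          • skewR B q.2.2.2 q.2.2.1 := by
  classical
  set s : Finset (P × P) :=
    ((B.tensorProduct B).repr (Coalgebra.comul (R := k) (B lam))).support with hs
  set sPiF : P → Finset P :=
    fun ρ => (hb τ σ).toFinset.biUnion (fun κ => (hb κ ρ).toFinset) with hsPiF
  set sRho : Finset P := (s.image Prod.snd).image T with hsRho
  set sLam : Finset P := s.image Prod.fst with hsLam
  set sPi : Finset P := sRho.biUnion sPiF with hsPi
  set sNu : Finset P := sPi.biUnion (fun π => (hc μ π).toFinset) with hsNu
  have mem_s : ∀ x y : P, cC B lam x y ≠ 0 → (x, y) ∈ s := fun x y h =>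
    Finsupp.mem_support_iff.2 h
  have not_mem_s : ∀ p : P × P, p ∉ s → cC B lam p.1 p.2 = 0 := by
    rintro ⟨x, y⟩ hp
    exact Finsupp.notMem_support_iff.1 hp
  -- convert the finsum into a finite sum over the product finset
  have hsub : (Function.support fun q : P × P × P × P =>
      (((-1 : k) ^ e q.2.1) * bC3 B τ q.1 q.2.1 σ
          * cC B lam q.2.2.1 (T q.2.1) * cC B q.2.2.2 μ q.1)
        • skewR B q.2.2.2 q.2.2.1) ⊆ ↑(sPi ×ˢ sRho ×ˢ sLam ×ˢ sNu) := by
    rintro ⟨π, ρ, lm, ν⟩ hq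
    have hco : ((-1 : k) ^ e ρ) * bC3 B τ π ρ σ * cC B lam lm (T ρ) * cC B ν μ π ≠ 0 := by
      intro h0
      exact hq (by simpa using congrArg (· • skewR B ν lm) h0)
    have h3 : cC B ν μ π ≠ 0 := right_ne_zero_of_mul hco
    have h2 : cC B lam lm (T ρ) ≠ 0 := right_ne_zero_of_mul (left_ne_zero_of_mul hco)
    have h1 : bC3 B τ π ρ σ ≠ 0 :=
      right_ne_zero_of_mul (left_ne_zero_of_mul (left_ne_zero_of_mul hco))
    have hmem : (lm, T ρ) ∈ s := mem_s _ _ h2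
    have hlm : lm ∈ sLam := Finset.mem_image.2 ⟨_, hmem, rfl⟩
    have hρ : ρ ∈ sRho := Finset.mem_image.2 ⟨T ρ, Finset.mem_image.2 ⟨_, hmem, rfl⟩, hT ρ⟩
    have hπF : π ∈ sPiF ρ := by
      simp only [hsPiF]
      exact bC3_mem B hb τ σ ρ π h1
    have hπ : π ∈ sPi := Finset.mem_biUnion.2 ⟨ρ, hρ, hπF⟩
    have hν : ν ∈ sNu := Finset.mem_biUnion.2 ⟨π, hπ, (hc μ π).mem_toFinset.2 h3⟩
    exact Finset.mem_coe.2 (by simp only [Finset.mem_product]; exact ⟨hπ, hρ, hlm, hν⟩)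
  rw [finsum_eq_sum_of_support_subset _ hsub]
  refine LinearMap.ext fun g => ?_
  rw [LinearMap.sum_apply]
  simp only [LinearMap.smul_apply, smul_eq_mul, Finset.sum_product]
  set G : P → P → k := fun π lm => ∑ ν ∈ sNu, cC B ν μ π * skewR B ν lm g with hG
  have lhs1 : conv (skewR B μ lam) (skewR B τ σ) g
      = LinearMap.mul' k k (TensorProduct.map (B.coord μ) (B.coord τ)
          (TensorProduct.map (LinearMap.mulRight k (B lam)) (LinearMap.mulRight k (B σ))
            (Coalgebra.comul (R := k) g))) := by
    rw [conv_apply']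
    simp only [skewR]
    rw [TensorProduct.map_comp, LinearMap.comp_apply]
  have lhs2 : conv (skewR B μ lam) (skewR B τ σ) g
      = ∑ p ∈ s, LinearMap.mul' k k (TensorProduct.map (B.coord μ) (B.coord τ)
          (Coalgebra.comul (R := k) (g * B p.1) *
            (1 ⊗ₜ[k] (HopfAlgebra.antipode (R := k) (cC B lam p.1 p.2 • B p.2) * B σ)))) := by
    rw [lhs1, key (basisRepr B lam) g (B σ), map_sum, map_sum]
    rfl
  have lhs3 : conv (skewR B μ lam) (skewR B τ σ) g
      = ∑ p ∈ s, cC B lam p.1 p.2 * ((-1 : k) ^ e (T p.2) *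
          ∑ π ∈ sPiF (T p.2), bC3 B τ π (T p.2) σ * G π p.1) := by
    rw [lhs2]
    refine Finset.sum_congr rfl fun p hp => ?_
    rw [map_smul, hS p.2, smul_smul, smul_mul_assoc, TensorProduct.tmul_smul,
      mul_smul_comm, map_smul, map_smul, smul_eq_mul]
    rw [inner_eval B hb hc μ τ σ (T p.2) (g * B p.1)]
    rw [heT p.2]
    have hTρ : T p.2 ∈ sRho := Finset.mem_image.2 ⟨p.2, Finset.mem_image.2 ⟨p, hp, rfl⟩, rfl⟩
    have hsum : ∑ π ∈ (hb τ σ).toFinset.biUnion (fun κ => (hb κ (T p.2)).toFinset),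
        bC3 B τ π (T p.2) σ * ∑ ν ∈ (hc μ π).toFinset, cC B ν μ π * B.coord ν (g * B p.1)
        = ∑ π ∈ sPiF (T p.2), bC3 B τ π (T p.2) σ * G π p.1 := by
      refine Finset.sum_congr rfl fun π hπ => ?_
      congr 1
      have hπPi : π ∈ sPi := Finset.mem_biUnion.2 ⟨T p.2, hTρ, hπ⟩
      rw [hG]
      simp only [show ∀ ν, B.coord ν (g * B p.1) = skewR B ν p.1 g from fun ν => rfl]
      refine Finset.sum_subset (fun ν hν => Finset.mem_biUnion.2 ⟨π, hπPi, hν⟩) ?_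
      intro ν _ hν
      have h0 : cC B ν μ π = 0 := by
        by_contra h
        exact hν ((hc μ π).mem_toFinset.2 h)
      rw [h0, zero_mul]
    rw [hsum]
    ring
  have extpi : ∀ p ∈ s, (∑ π ∈ sPiF (T p.2), bC3 B τ π (T p.2) σ * G π p.1)
      = ∑ π ∈ sPi, bC3 B τ π (T p.2) σ * G π p.1 := by
    intro p hp
    have hTρ : T p.2 ∈ sRho := Finset.mem_image.2 ⟨p.2, Finset.mem_image.2 ⟨p, hp, rfl⟩, rfl⟩
    refine Finset.sum_subset (Finset.subset_biUnion_of_mem sPiF hTρ) ?_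
    intro π _ hπ
    have h0 : bC3 B τ π (T p.2) σ = 0 := by
      by_contra h
      exact hπ (by simp only [hsPiF]; exact bC3_mem B hb τ σ (T p.2) π h)
    rw [h0, zero_mul]
  set W : P → P → k := fun lm ρ => (-1 : k) ^ (e ρ) * ∑ π ∈ sPi, bC3 B τ π ρ σ * G π lm
    with hW
  have lhs4 : conv (skewR B μ lam) (skewR B τ σ) g
      = ∑ p ∈ s, cC B lam p.1 p.2 * W p.1 (T p.2) := by
    rw [lhs3]
    refine Finset.sum_congr rfl fun p hp => ?_
    rw [hW]
    rw [extpi p hp]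
  have hψ : ∀ p : P × P, ((p.1, T p.2).1, T (p.1, T p.2).2) = p := by
    rintro ⟨x, y⟩
    simp [hT y]
  have stepB : ∑ p ∈ s, cC B lam p.1 p.2 * W p.1 (T p.2)
      = ∑ lm ∈ sLam, ∑ ρ ∈ sRho, cC B lam lm (T ρ) * W lm ρ := by
    calc ∑ p ∈ s, cC B lam p.1 p.2 * W p.1 (T p.2)
        = ∑ p ∈ (sLam ×ˢ sRho).image (fun q : P × P => (q.1, T q.2)),
            cC B lam p.1 p.2 * W p.1 (T p.2) := by
          refine Finset.sum_subset ?_ ?_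
          · intro p hp
            refine Finset.mem_image.2 ⟨(p.1, T p.2), ?_, hψ p⟩
            exact Finset.mem_product.2 ⟨Finset.mem_image.2 ⟨p, hp, rfl⟩,
              Finset.mem_image.2 ⟨p.2, Finset.mem_image.2 ⟨p, hp, rfl⟩, rfl⟩⟩
          · intro p _ hps
            rw [not_mem_s p hps, zero_mul]
      _ = ∑ q ∈ sLam ×ˢ sRho, cC B lam q.1 (T q.2) * W q.1 (T (T q.2)) := by
          refine Finset.sum_image ?_
          intro x _ y _ hxy
          have h1 := congrArg Prod.fst hxy
          have h2 := congrArg (fun q : P × P => T q.2) hxy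
          simp only at h1 h2
          rw [hT x.2, hT y.2] at h2
          exact Prod.ext h1 h2
      _ = ∑ q ∈ sLam ×ˢ sRho, cC B lam q.1 (T q.2) * W q.1 q.2 := by
          refine Finset.sum_congr rfl fun q _ => ?_
          rw [hT q.2]
      _ = ∑ lm ∈ sLam, ∑ ρ ∈ sRho, cC B lam lm (T ρ) * W lm ρ := by
          rw [Finset.sum_product]
  rw [lhs4, stepB]
  calc ∑ lm ∈ sLam, ∑ ρ ∈ sRho, cC B lam lm (T ρ) * W lm ρ
      = ∑ lm ∈ sLam, ∑ ρ ∈ sRho, ∑ π ∈ sPi, ∑ ν ∈ sNu,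
          (-1 : k) ^ e ρ * bC3 B τ π ρ σ * cC B lam lm (T ρ) * cC B ν μ π
            * skewR B ν lm g := by
        refine Finset.sum_congr rfl fun lm _ => Finset.sum_congr rfl fun ρ _ => ?_
        rw [hW]
        simp only [hG, Finset.mul_sum]
        refine Finset.sum_congr rfl fun π _ => Finset.sum_congr rfl fun ν _ => ?_
        ring
    _ = ∑ lm ∈ sLam, ∑ π ∈ sPi, ∑ ρ ∈ sRho, ∑ ν ∈ sNu,
          (-1 : k) ^ e ρ * bC3 B τ π ρ σ * cC B lam lm (T ρ) * cC B ν μ π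
            * skewR B ν lm g :=
        Finset.sum_congr rfl fun lm _ => Finset.sum_comm
    _ = ∑ π ∈ sPi, ∑ lm ∈ sLam, ∑ ρ ∈ sRho, ∑ ν ∈ sNu,
          (-1 : k) ^ e ρ * bC3 B τ π ρ σ * cC B lam lm (T ρ) * cC B ν μ π
            * skewR B ν lm g := Finset.sum_comm
    _ = ∑ π ∈ sPi, ∑ ρ ∈ sRho, ∑ lm ∈ sLam, ∑ ν ∈ sNu,
          (-1 : k) ^ e ρ * bC3 B τ π ρ σ * cC B lam lm (T ρ) * cC B ν μ π
            * skewR B ν lm g :=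
        Finset.sum_congr rfl fun π _ => Finset.sum_comm
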